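/- Let V be a compact metric space, λ the Lebesgue measure on [0,T], and ζ, ζ^k ∈ Λ([0,T], λ, V) (measures on [0,T]×V with time marginal λ) with ζ^k → ζ narrowly. Let ψ : [0,T]×V → ℝ^{d'} be continuous. Then ∫_{[0,t]×V} ψ dζ^k → ∫_{[0,t]×V} ψ dζ uniformly in t ∈ [0,T]. -/

import Mathlib

open MeasureTheory Filter

set_option linter.unusedSectionVars false

section AuxRC

lemma coord_norm_le_rc {n : ℕ} (x : EuclideanSpace ℝ (Fin n)) (i : Fin n) : ‖x i‖ ≤ ‖x‖ := by
  rw [EuclideanSpace.norm_eq, Real.norm_eq_abs, ← Real.sqrt_sq_eq_abs]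
  apply Real.sqrt_le_sqrt
  have h : x i ^ 2 = ‖x i‖ ^ 2 := by rw [Real.norm_eq_abs, sq_abs]
  rw [h]
  exact Finset.single_le_sum (f := fun j => ‖x j‖ ^ 2) (fun j _ => sq_nonneg _) (Finset.mem_univ i)

noncomputable def cutoffRC (δ t s : ℝ) : ℝ := max 0 (min 1 ((t + δ - s) / δ))

lemma cutoffRC_continuous (δ t : ℝ) : Continuous (cutoffRC δ t) := by
  unfold cutoffRC
  exact continuous_const.max (continuous_const.min
    ((continuous_const.sub continuous_id).div_const δ))

lemma cutoffRC_nonneg (δ t s : ℝ) : 0 ≤ cutoffRC δ t s := le_max_left _ _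

lemma cutoffRC_le_one (δ t s : ℝ) : cutoffRC δ t s ≤ 1 :=
  max_le zero_le_one (min_le_left _ _)

lemma cutoffRC_eq_one {δ t s : ℝ} (hδ : 0 < δ) (h : s ≤ t) : cutoffRC δ t s = 1 := by
  unfold cutoffRC
  rw [min_eq_left, max_eq_right zero_le_one]
  rw [le_div_iff₀ hδ, one_mul]; linarith

lemma cutoffRC_eq_zero {δ t s : ℝ} (hδ : 0 < δ) (h : t + δ < s) : cutoffRC δ t s = 0 := by
  unfold cutoffRC
  rw [max_eq_left]
  rw [min_le_iff]; right
  exact (div_nonpos_iff.mpr (Or.inr ⟨by linarith, hδ.le⟩))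

lemma norm_sub_chain5_rc {E : Type*} [NormedAddCommGroup E] (a b c d e f : E) :
    ‖a - f‖ ≤ ‖a - b‖ + ‖b - c‖ + ‖c - d‖ + ‖d - e‖ + ‖e - f‖ := by
  calc ‖a - f‖ = ‖(a - b) + ((b - c) + ((c - d) + ((d - e) + (e - f))))‖ := by
        congr 1; abel
    _ ≤ ‖a - b‖ + (‖b - c‖ + (‖c - d‖ + (‖d - e‖ + ‖e - f‖))) := by
        refine (norm_add_le _ _).trans (add_le_add le_rfl ((norm_add_le _ _).trans
          (add_le_add le_rfl ((norm_add_le _ _).trans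
          (add_le_add le_rfl (norm_add_le _ _))))))
    _ = ‖a - b‖ + ‖b - c‖ + ‖c - d‖ + ‖d - e‖ + ‖e - f‖ := by ring

variable {V : Type*} [MetricSpace V] [MeasurableSpace V] [BorelSpace V] {T : ℝ}
  {d' : ℕ} {ψ : ℝ × V → EuclideanSpace ℝ (Fin d')} {C : ℝ}

lemma marg_fin_rc (μ : Measure (ℝ × V)) (h : μ.map Prod.fst = volume.restrict (Set.Icc 0 T)) :
    IsFiniteMeasure μ := by
  refine ⟨?_⟩
  have h1 : μ Set.univ = μ.map Prod.fst Set.univ := by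
    rw [Measure.map_apply measurable_fst MeasurableSet.univ, Set.preimage_univ]
  rw [h1, h, Measure.restrict_apply MeasurableSet.univ, Set.univ_inter, Real.volume_Icc]
  exact ENNReal.ofReal_lt_top

lemma marg_strip_rc (μ : Measure (ℝ × V)) (h : μ.map Prod.fst = volume.restrict (Set.Icc 0 T))
    {s : Set ℝ} (hs : MeasurableSet s) :
    μ (s ×ˢ (Set.univ : Set V)) = (volume.restrict (Set.Icc 0 T)) s := by
  rw [Set.prod_univ, ← Measure.map_apply measurable_fst hs, h]

lemma marg_ae_rc (μ : Measure (ℝ × V)) (h : μ.map Prod.fst = volume.restrict (Set.Icc 0 T)) :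
    ∀ᵐ z ∂μ, z.1 ∈ Set.Icc 0 T := by
  have h0 : μ ((Set.Icc (0:ℝ) T)ᶜ ×ˢ (Set.univ : Set V)) = 0 := by
    rw [marg_strip_rc μ h measurableSet_Icc.compl,
      Measure.restrict_apply measurableSet_Icc.compl, Set.compl_inter_self, measure_empty]
  rw [ae_iff]
  have hset : {z : ℝ × V | ¬ z.1 ∈ Set.Icc 0 T} = (Set.Icc (0:ℝ) T)ᶜ ×ˢ (Set.univ : Set V) := by
    ext z; simp
  rw [hset]; exact h0

lemma strip_toReal_le_rc (μ : Measure (ℝ × V))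
    (hmarg : μ.map Prod.fst = volume.restrict (Set.Icc 0 T)) (s t : ℝ) :
    (μ (Set.Ioc s t ×ˢ (Set.univ : Set V))).toReal ≤ max (t - s) 0 := by
  rw [marg_strip_rc μ hmarg measurableSet_Ioc, Measure.restrict_apply measurableSet_Ioc]
  apply ENNReal.toReal_le_of_le_ofReal (le_max_right _ _)
  calc volume (Set.Ioc s t ∩ Set.Icc 0 T) ≤ volume (Set.Ioc s t) :=
        measure_mono Set.inter_subset_left
    _ = ENNReal.ofReal (t - s) := Real.volume_Ioc
    _ ≤ ENNReal.ofReal (max (t - s) 0) := ENNReal.ofReal_le_ofReal (le_max_left _ _)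

lemma disjoint_strip_rc (a b : Set ℝ) (h : Disjoint a b) :
    Disjoint (a ×ˢ (Set.univ : Set V)) (b ×ˢ (Set.univ : Set V)) := by
  rw [Set.disjoint_left] at h ⊢
  rintro ⟨x, v⟩ h1 h2
  exact h h1.1 h2.1

lemma lipF_rc (μ : Measure (ℝ × V)) [IsFiniteMeasure μ]
    (hmarg : μ.map Prod.fst = volume.restrict (Set.Icc 0 T))
    (hint : Integrable ψ μ) (hC0 : 0 ≤ C) (hCb : ∀ z, ‖ψ z‖ ≤ C)
    {s t : ℝ} (hs : 0 ≤ s) (hst : s ≤ t) :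
    ‖(∫ z in Set.Icc (0:ℝ) t ×ˢ (Set.univ : Set V), ψ z ∂μ) -
      ∫ z in Set.Icc (0:ℝ) s ×ˢ (Set.univ : Set V), ψ z ∂μ‖ ≤ C * (t - s) := by
  have hun : Set.Icc (0:ℝ) t ×ˢ (Set.univ : Set V)
      = Set.Icc (0:ℝ) s ×ˢ Set.univ ∪ Set.Ioc s t ×ˢ Set.univ := by
    rw [← Set.union_prod, Set.Icc_union_Ioc_eq_Icc hs hst]
  rw [hun, setIntegral_union (disjoint_strip_rc _ _ ((Set.Iic_disjoint_Ioc le_rfl).mono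
      Set.Icc_subset_Iic_self le_rfl))
    (measurableSet_Ioc.prod MeasurableSet.univ) hint.integrableOn hint.integrableOn,
    add_sub_cancel_left]
  calc ‖∫ z in Set.Ioc s t ×ˢ (Set.univ : Set V), ψ z ∂μ‖
      ≤ C * (μ (Set.Ioc s t ×ˢ (Set.univ : Set V))).toReal :=
        norm_setIntegral_le_of_norm_le_const (measure_lt_top _ _) (fun z _ => hCb z)
    _ ≤ C * (t - s) := by
        apply mul_le_mul_of_nonneg_left _ hC0
        have := strip_toReal_le_rc μ hmarg s t
        rwa [max_eq_left (by linarith)] at this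

lemma close1_rc (μ : Measure (ℝ × V)) [IsFiniteMeasure μ]
    (hmarg : μ.map Prod.fst = volume.restrict (Set.Icc 0 T))
    (hψ : Continuous ψ) (hC0 : 0 ≤ C) (hCb : ∀ z, ‖ψ z‖ ≤ C)
    {δ t : ℝ} (hδ : 0 < δ) (ht0 : 0 ≤ t) :
    ‖(∫ z, cutoffRC δ t z.1 • ψ z ∂μ) -
      ∫ z in Set.Icc (0:ℝ) t ×ˢ (Set.univ : Set V), ψ z ∂μ‖ ≤ C * δ := by
  have hcont : Continuous (fun z : ℝ × V => cutoffRC δ t z.1 • ψ z) :=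
    ((cutoffRC_continuous δ t).comp continuous_fst).smul hψ
  have hbd : ∀ z : ℝ × V, ‖cutoffRC δ t z.1 • ψ z‖ ≤ C := by
    intro z
    rw [norm_smul, Real.norm_eq_abs, abs_of_nonneg (cutoffRC_nonneg δ t z.1)]
    calc cutoffRC δ t z.1 * ‖ψ z‖ ≤ 1 * C :=
      mul_le_mul (cutoffRC_le_one δ t z.1) (hCb z) (norm_nonneg _) zero_le_one
    _ = C := one_mul C
  have hint : Integrable (fun z : ℝ × V => cutoffRC δ t z.1 • ψ z) μ :=
    (BoundedContinuousFunction.ofNormedAddCommGroup _ hcont C hbd).integrable μ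
  have step_a : ∫ z, cutoffRC δ t z.1 • ψ z ∂μ
      = ∫ z in Set.Icc (0:ℝ) (t + δ) ×ˢ (Set.univ : Set V), cutoffRC δ t z.1 • ψ z ∂μ := by
    symm
    apply setIntegral_eq_integral_of_ae_compl_eq_zero
    filter_upwards [marg_ae_rc μ hmarg] with z hz hnz
    have hlt : t + δ < z.1 := by
      by_contra hle
      push_neg at hle
      exact hnz (by simp [Set.mem_prod, Set.mem_Icc, hz.1, hle])
    rw [cutoffRC_eq_zero hδ hlt, zero_smul]
  have hun : Set.Icc (0:ℝ) (t + δ) ×ˢ (Set.univ : Set V)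
      = Set.Icc (0:ℝ) t ×ˢ Set.univ ∪ Set.Ioc t (t + δ) ×ˢ Set.univ := by
    rw [← Set.union_prod, Set.Icc_union_Ioc_eq_Icc ht0 (by linarith)]
  have step_b : ∫ z in Set.Icc (0:ℝ) (t + δ) ×ˢ (Set.univ : Set V), cutoffRC δ t z.1 • ψ z ∂μ
      = (∫ z in Set.Icc (0:ℝ) t ×ˢ (Set.univ : Set V), cutoffRC δ t z.1 • ψ z ∂μ)
        + ∫ z in Set.Ioc t (t + δ) ×ˢ (Set.univ : Set V), cutoffRC δ t z.1 • ψ z ∂μ := by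
    rw [hun]
    exact setIntegral_union (disjoint_strip_rc _ _ ((Set.Iic_disjoint_Ioc le_rfl).mono
      Set.Icc_subset_Iic_self le_rfl)) (measurableSet_Ioc.prod MeasurableSet.univ)
      hint.integrableOn hint.integrableOn
  have step_c : ∫ z in Set.Icc (0:ℝ) t ×ˢ (Set.univ : Set V), cutoffRC δ t z.1 • ψ z ∂μ
      = ∫ z in Set.Icc (0:ℝ) t ×ˢ (Set.univ : Set V), ψ z ∂μ := by
    apply setIntegral_congr_fun (measurableSet_Icc.prod MeasurableSet.univ)
    intro z hz
    show cutoffRC δ t z.1 • ψ z = ψ z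
    rw [cutoffRC_eq_one hδ hz.1.2, one_smul]
  rw [step_a, step_b, step_c, add_sub_cancel_left]
  calc ‖∫ z in Set.Ioc t (t + δ) ×ˢ (Set.univ : Set V), cutoffRC δ t z.1 • ψ z ∂μ‖
      ≤ C * (μ (Set.Ioc t (t + δ) ×ˢ (Set.univ : Set V))).toReal :=
        norm_setIntegral_le_of_norm_le_const (measure_lt_top _ _) (fun z _ => hbd z)
    _ ≤ C * δ := by
        apply mul_le_mul_of_nonneg_left _ hC0
        have := strip_toReal_le_rc μ hmarg t (t + δ)
        rwa [max_eq_left (by linarith), add_sub_cancel_left] at this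

lemma tendsto_integral_bcf_rc (d' : ℕ) (ζ : Measure (ℝ × V)) (ζk : ℕ → Measure (ℝ × V))
    [IsFiniteMeasure ζ] (hfin : ∀ k, IsFiniteMeasure (ζk k))
    (hnarrow : ∀ f : BoundedContinuousFunction (ℝ × V) ℝ,
      Tendsto (fun k => ∫ z, f z ∂(ζk k)) atTop (nhds (∫ z, f z ∂ζ)))
    (g : BoundedContinuousFunction (ℝ × V) (EuclideanSpace ℝ (Fin d'))) :
    Tendsto (fun k => ∫ z, g z ∂(ζk k)) atTop (nhds (∫ z, g z ∂ζ)) := by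
  have hcoord : ∀ (i : Fin d') (μ : Measure (ℝ × V)), IsFiniteMeasure μ →
      (∫ z, g z ∂μ) i = ∫ z, g z i ∂μ := by
    intro i μ hμ
    have h := (EuclideanSpace.proj (𝕜 := ℝ) i).integral_comp_comm (g.integrable μ)
    simpa using h.symm
  set e : EuclideanSpace ℝ (Fin d') ≃L[ℝ] (Fin d' → ℝ) := EuclideanSpace.equiv (Fin d') ℝ with he
  have hpi : Tendsto (fun k => e (∫ z, g z ∂(ζk k))) atTop (nhds (e (∫ z, g z ∂ζ))) := by
    rw [tendsto_pi_nhds]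
    intro i
    have hco : ∀ x : EuclideanSpace ℝ (Fin d'), e x i = x i := fun x => rfl
    simp only [hco]
    have hfun : (fun k => (∫ z, g z ∂(ζk k)) i) = fun k => ∫ z, g z i ∂(ζk k) :=
      funext fun k => hcoord i (ζk k) (hfin k)
    rw [hfun, hcoord i ζ inferInstance]
    exact hnarrow (BoundedContinuousFunction.ofNormedAddCommGroup (fun z => g z i)
      ((EuclideanSpace.proj (𝕜 := ℝ) i).continuous.comp g.continuous) ‖g‖
      (fun z => le_trans (coord_norm_le_rc _ i) (g.norm_coe_le_norm z)))
  have h2 := (e.symm.continuous.tendsto _).comp hpi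
  simpa [Function.comp_def] using h2

lemma main_unif_rc (T : ℝ) (hT : 0 < T)
    {V : Type*} [MetricSpace V] [MeasurableSpace V] [BorelSpace V] (d' : ℕ)
    (ζ : Measure (ℝ × V)) (ζk : ℕ → Measure (ℝ × V))
    (hζ : ζ.map Prod.fst = volume.restrict (Set.Icc 0 T))
    (hζk : ∀ k, (ζk k).map Prod.fst = volume.restrict (Set.Icc 0 T))
    (hnarrow : ∀ f : BoundedContinuousFunction (ℝ × V) ℝ,
      Tendsto (fun k => ∫ z, f z ∂(ζk k)) atTop (nhds (∫ z, f z ∂ζ)))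
    (ψ : ℝ × V → EuclideanSpace ℝ (Fin d')) (hψ : Continuous ψ)
    (C : ℝ) (hC0 : 0 ≤ C) (hCb : ∀ z, ‖ψ z‖ ≤ C) :
    TendstoUniformlyOn
      (fun k t => ∫ z in Set.Icc (0 : ℝ) t ×ˢ (Set.univ : Set V), ψ z ∂(ζk k))
      (fun t => ∫ z in Set.Icc (0 : ℝ) t ×ˢ (Set.univ : Set V), ψ z ∂ζ)
      atTop (Set.Icc 0 T) := by
  haveI : IsFiniteMeasure ζ := marg_fin_rc ζ hζ
  have hfin : ∀ k, IsFiniteMeasure (ζk k) := fun k => marg_fin_rc _ (hζk k)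
  have hψint : ∀ (μ : Measure (ℝ × V)), IsFiniteMeasure μ → Integrable ψ μ := by
    intro μ hμ
    exact (BoundedContinuousFunction.ofNormedAddCommGroup ψ hψ C hCb).integrable μ
  rw [Metric.tendstoUniformlyOn_iff]
  intro ε hε
  set δ : ℝ := ε / (8 * (C + 1)) with hδdef
  have hδ : 0 < δ := div_pos hε (by positivity)
  have hCδ : C * δ ≤ ε / 8 := by
    have h1 : (C + 1) * δ = ε / 8 := by
      rw [hδdef]; field_simp
    nlinarith [hδ.le]
  have hcont : ∀ t : ℝ, Continuous (fun z : ℝ × V => cutoffRC δ t z.1 • ψ z) :=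
    fun t => ((cutoffRC_continuous δ t).comp continuous_fst).smul hψ
  have hbd : ∀ (t : ℝ) (z : ℝ × V), ‖cutoffRC δ t z.1 • ψ z‖ ≤ C := by
    intro t z
    rw [norm_smul, Real.norm_eq_abs, abs_of_nonneg (cutoffRC_nonneg δ t z.1)]
    calc cutoffRC δ t z.1 * ‖ψ z‖ ≤ 1 * C :=
      mul_le_mul (cutoffRC_le_one δ t z.1) (hCb z) (norm_nonneg _) zero_le_one
    _ = C := one_mul C
  have hGtend : ∀ t : ℝ, Tendsto (fun k => ∫ z, cutoffRC δ t z.1 • ψ z ∂(ζk k)) atTop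
      (nhds (∫ z, cutoffRC δ t z.1 • ψ z ∂ζ)) := fun t =>
    tendsto_integral_bcf_rc d' ζ ζk hfin hnarrow
      (BoundedContinuousFunction.ofNormedAddCommGroup _ (hcont t) C (hbd t))
  set N : ℕ := ⌈T / δ⌉₊ with hNdef
  have hev : ∀ᶠ k in atTop, ∀ i ∈ Finset.range (N + 1),
      ‖(∫ z, cutoffRC δ ((i : ℝ) * δ) z.1 • ψ z ∂(ζk k))
        - ∫ z, cutoffRC δ ((i : ℝ) * δ) z.1 • ψ z ∂ζ‖ < ε / 4 := by
    rw [Filter.eventually_all_finset]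
    intro i _
    exact (tendsto_iff_norm_sub_tendsto_zero.mp (hGtend ((i : ℝ) * δ))).eventually_lt_const
      (by positivity)
  filter_upwards [hev] with k hk t ht
  haveI : IsFiniteMeasure (ζk k) := hfin k
  obtain ⟨ht0, htT⟩ := ht
  set i : ℕ := ⌊t / δ⌋₊ with hidef
  have hiN : i ≤ N := le_trans (Nat.floor_le_floor (by gcongr)) (Nat.floor_le_ceil _)
  set s : ℝ := (i : ℝ) * δ with hsdef
  have hs_le : s ≤ t := by
    have h3 : ((i : ℕ) : ℝ) ≤ t / δ := Nat.floor_le (div_nonneg ht0 hδ.le)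
    rw [hsdef]
    calc (i : ℝ) * δ ≤ (t / δ) * δ := mul_le_mul_of_nonneg_right h3 hδ.le
      _ = t := by field_simp
  have hs0 : 0 ≤ s := by positivity
  have ht_s : t - s ≤ δ := by
    have h2 : t / δ < (i : ℝ) + 1 := by exact_mod_cast Nat.lt_floor_add_one (t / δ)
    have h4 : t < ((i : ℝ) + 1) * δ := by
      calc t = (t / δ) * δ := by field_simp
        _ < ((i : ℝ) + 1) * δ := mul_lt_mul_of_pos_right h2 hδ
    have h5 : ((i : ℝ) + 1) * δ = s + δ := by rw [hsdef]; ring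
    linarith
  have hmid := hk i (Finset.mem_range.mpr (Nat.lt_succ_of_le hiN))
  rw [← hsdef] at hmid
  rw [norm_sub_rev] at hmid
  have e1 : ‖(∫ z in Set.Icc (0:ℝ) t ×ˢ (Set.univ : Set V), ψ z ∂ζ)
      - ∫ z in Set.Icc (0:ℝ) s ×ˢ (Set.univ : Set V), ψ z ∂ζ‖ ≤ ε / 8 :=
    le_trans (lipF_rc ζ hζ (hψint ζ inferInstance) hC0 hCb hs0 hs_le)
      (le_trans (mul_le_mul_of_nonneg_left ht_s hC0) hCδ)
  have e2 : ‖(∫ z, cutoffRC δ s z.1 • ψ z ∂ζ)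
      - ∫ z in Set.Icc (0:ℝ) s ×ˢ (Set.univ : Set V), ψ z ∂ζ‖ ≤ ε / 8 :=
    le_trans (close1_rc ζ hζ hψ hC0 hCb hδ hs0) hCδ
  have e4 : ‖(∫ z, cutoffRC δ s z.1 • ψ z ∂(ζk k))
      - ∫ z in Set.Icc (0:ℝ) s ×ˢ (Set.univ : Set V), ψ z ∂(ζk k)‖ ≤ ε / 8 :=
    le_trans (close1_rc (ζk k) (hζk k) hψ hC0 hCb hδ hs0) hCδ
  have e5 : ‖(∫ z in Set.Icc (0:ℝ) t ×ˢ (Set.univ : Set V), ψ z ∂(ζk k))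
      - ∫ z in Set.Icc (0:ℝ) s ×ˢ (Set.univ : Set V), ψ z ∂(ζk k)‖ ≤ ε / 8 :=
    le_trans (lipF_rc (ζk k) (hζk k) (hψint (ζk k) inferInstance) hC0 hCb hs0 hs_le)
      (le_trans (mul_le_mul_of_nonneg_left ht_s hC0) hCδ)
  rw [dist_eq_norm]
  have hchain := norm_sub_chain5_rc
    (∫ z in Set.Icc (0:ℝ) t ×ˢ (Set.univ : Set V), ψ z ∂ζ)
    (∫ z in Set.Icc (0:ℝ) s ×ˢ (Set.univ : Set V), ψ z ∂ζ)
    (∫ z, cutoffRC δ s z.1 • ψ z ∂ζ)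
    (∫ z, cutoffRC δ s z.1 • ψ z ∂(ζk k))
    (∫ z in Set.Icc (0:ℝ) s ×ˢ (Set.univ : Set V), ψ z ∂(ζk k))
    (∫ z in Set.Icc (0:ℝ) t ×ˢ (Set.univ : Set V), ψ z ∂(ζk k))
  rw [norm_sub_rev] at e2 e5
  linarith

end AuxRC

/-- for relaxed controls `ζ^k → ζ` narrowly (all with time marginal equal to
Lebesgue measure on `[0,T]`) and continuous `ψ`, the truncated integrals
`∫_{[0,t]×V} ψ dζ^k` converge to `∫_{[0,t]×V} ψ dζ` uniformly in `t ∈ [0,T]`. -/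
theorem relaxed_control_integrals_tendsto_uniformly (T : ℝ) (hT : 0 < T)
    {V : Type*} [MetricSpace V] [CompactSpace V] [MeasurableSpace V] [BorelSpace V]
    (d' : ℕ)
    (ζ : Measure (ℝ × V)) (ζk : ℕ → Measure (ℝ × V))
    (hζ : ζ.map Prod.fst = volume.restrict (Set.Icc 0 T))
    (hζk : ∀ k, (ζk k).map Prod.fst = volume.restrict (Set.Icc 0 T))
    (hnarrow : ∀ f : BoundedContinuousFunction (ℝ × V) ℝ,
      Tendsto (fun k => ∫ z, f z ∂(ζk k)) atTop (nhds (∫ z, f z ∂ζ)))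
    (ψ : ℝ × V → EuclideanSpace ℝ (Fin d')) (hψ : Continuous ψ) :
    TendstoUniformlyOn
      (fun k t => ∫ z in Set.Icc (0 : ℝ) t ×ˢ (Set.univ : Set V), ψ z ∂(ζk k))
      (fun t => ∫ z in Set.Icc (0 : ℝ) t ×ˢ (Set.univ : Set V), ψ z ∂ζ)
      atTop (Set.Icc 0 T) := by
  -- reduce to a globally bounded integrand by clamping the time variable to `[0, T]`
  set proj : ℝ → ℝ := fun u => max 0 (min u T) with hprojdef
  have hproj_cont : Continuous proj := continuous_const.max (continuous_id.min continuous_const)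
  have hproj_mem : ∀ u, proj u ∈ Set.Icc (0:ℝ) T := by
    intro u
    exact ⟨le_max_left _ _, max_le hT.le (min_le_right _ _)⟩
  have hproj_id : ∀ u ∈ Set.Icc (0:ℝ) T, proj u = u := by
    rintro u ⟨h0, h1⟩
    rw [hprojdef]
    simp only [min_eq_left h1, max_eq_right h0]
  set φ : ℝ × V → EuclideanSpace ℝ (Fin d') := fun z => ψ (proj z.1, z.2) with hφdef
  have hφcont : Continuous φ := hψ.comp ((hproj_cont.comp continuous_fst).prodMk continuous_snd)
  obtain ⟨C, hC⟩ : ∃ C, ∀ z ∈ (Set.Icc (0:ℝ) T ×ˢ (Set.univ : Set V)), ‖ψ z‖ ≤ C :=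
    (isCompact_Icc.prod isCompact_univ).exists_bound_of_continuousOn hψ.continuousOn
  have hφbd : ∀ z, ‖φ z‖ ≤ max C 0 := fun z =>
    le_trans (hC (proj z.1, z.2) ⟨hproj_mem z.1, Set.mem_univ _⟩) (le_max_left _ _)
  have hmain := main_unif_rc T hT d' ζ ζk hζ hζk hnarrow φ hφcont (max C 0)
    (le_max_right _ _) hφbd
  have heq : ∀ (μ : Measure (ℝ × V)), ∀ t ∈ Set.Icc (0:ℝ) T,
      (∫ z in Set.Icc (0 : ℝ) t ×ˢ (Set.univ : Set V), φ z ∂μ)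
        = ∫ z in Set.Icc (0 : ℝ) t ×ˢ (Set.univ : Set V), ψ z ∂μ := by
    intro μ t ht
    apply setIntegral_congr_fun (measurableSet_Icc.prod MeasurableSet.univ)
    intro z hz
    show ψ (proj z.1, z.2) = ψ z
    rw [hproj_id z.1 ⟨hz.1.1, le_trans hz.1.2 ht.2⟩]
  exact (hmain.congr (Filter.Eventually.of_forall fun k =>
      fun t ht => heq (ζk k) t ht)).congr_right (fun t ht => heq ζ t ht)
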